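/- arXiv:1308.0754 — 2 statements merged into one kernel-verified Lean document; each statement's English description precedes it below -/
import Mathlib

section
/- Let t > 0, ℓ > 0 and θ, φ, m, ψ ∈ ℝ, and set g := k_θ · a_t · k_φ · k_{−m} and M := k_m · a_ℓ · k_ψ in SL₂(ℝ). Assume cosh ℓ · cosh t + cos φ · sinh ℓ · sinh t > 1 (so that gM·i ≠ i) and cosh ℓ · sinh t + sinh ℓ · cos φ · cosh t ≠ 0. Then tan(θ_{gM} − θ_g) = (sinh ℓ · sin φ) / (cosh ℓ · sinh t + sinh ℓ · cos φ · cosh t). Moreover ‖gM‖² = 2·(cosh ℓ · cosh t + cos φ · sinh ℓ · sinh t) and ‖g‖² = 2·cosh t. -/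
open Matrix MeasureTheory Real Filter Topology
open scoped MatrixGroups Pointwise

noncomputable section

/-- `SL(2,ℝ)` as the special linear group of 2×2 real matrices. -/
abbrev SL2R := Matrix.SpecialLinearGroup (Fin 2) ℝ

instance : TopologicalSpace SL2R :=
  show TopologicalSpace {A : Matrix (Fin 2) (Fin 2) ℝ // A.det = 1} from inferInstance

instance : MeasurableSpace SL2R := borel SL2R

/-- Squared Frobenius norm `‖g‖² = a² + b² + c² + d²`. -/
def fnormSq (g : SL2R) : ℝ :=
  (g : Matrix (Fin 2) (Fin 2) ℝ) 0 0 ^ 2 + (g : Matrix (Fin 2) (Fin 2) ℝ) 0 1 ^ 2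
    + (g : Matrix (Fin 2) (Fin 2) ℝ) 1 0 ^ 2 + (g : Matrix (Fin 2) (Fin 2) ℝ) 1 1 ^ 2

/-- Frobenius norm `‖g‖`. -/
def fnorm (g : SL2R) : ℝ := Real.sqrt (fnormSq g)

/-- The angle `θ_g = arg((g·i − i)/(g·i + i)) ∈ (−π, π]`; equals `0` when `g·i = i`. -/
def theta (g : SL2R) : ℝ :=
  Complex.arg ((((g • UpperHalfPlane.I : UpperHalfPlane) : ℂ) - Complex.I)
    / (((g • UpperHalfPlane.I : UpperHalfPlane) : ℂ) + Complex.I))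

/-- Distance between two angles: the distance from `a − b` to the nearest element of `2πℤ`. -/
def angDist (a b : ℝ) : ℝ := |((a - b : ℝ) : Real.Angle).toReal|

/-- Inverse hyperbolic cosine. -/
def arccosh (x : ℝ) : ℝ := Real.log (x + Real.sqrt (x ^ 2 - 1))

/-- `ℓ(M) = arccosh(‖M‖²/2)`, the hyperbolic distance from `i` to `M·i`. -/
def ell (M : SL2R) : ℝ := arccosh (fnormSq M / 2)

/-- The pair-correlation density building block `f_ξ(ℓ)`. -/
def fxi (ξ l : ℝ) : ℝ :=
  if Real.sinh l ≤ ξ then 2 / ξ ^ 2 * l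
  else if 2 * Real.sinh (l / 2) ≤ ξ then
    2 / ξ ^ 2 * (l + Real.log (1 + ξ ^ 2)
      - 2 * Real.log (Real.cosh l + Real.sqrt (Real.sinh l ^ 2 - ξ ^ 2)))
  else 2 / ξ ^ 2 * (l - Real.log (Real.cosh l + Real.sqrt (Real.sinh l ^ 2 - ξ ^ 2)))

/-- The rotation matrix `k_φ ∈ SL(2,ℝ)`. -/
def kMat (φ : ℝ) : SL2R :=
  ⟨!![Real.cos (φ / 2), Real.sin (φ / 2); -Real.sin (φ / 2), Real.cos (φ / 2)], by
    rw [Matrix.det_fin_two_of]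
    linear_combination Real.sin_sq_add_cos_sq (φ / 2)⟩

/-- The diagonal matrix `a_t ∈ SL(2,ℝ)`. -/
def aMat (t : ℝ) : SL2R :=
  ⟨!![Real.exp (t / 2), 0; 0, Real.exp (-t / 2)], by
    rw [Matrix.det_fin_two_of, ← Real.exp_add]
    norm_num
    ring⟩


section Helpers

open Complex UpperHalfPlane

lemma kMat_mul (a b : ℝ) : kMat a * kMat b = kMat (a + b) := by
  ext i j
  simp only [Matrix.SpecialLinearGroup.coe_mul]
  simp only [kMat, Matrix.SpecialLinearGroup.coe_mul, Matrix.mul_fin_two]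
  have : (a + b) / 2 = a / 2 + b / 2 := by ring
  rw [this, Real.cos_add, Real.sin_add]
  fin_cases i <;> fin_cases j <;> simp <;> ring

lemma kMat_zero : kMat 0 = 1 := by
  ext i j
  rw [Matrix.SpecialLinearGroup.coe_one, Matrix.one_fin_two]
  fin_cases i <;> fin_cases j <;> simp [kMat]

lemma smul_coe (g : SL2R) (z : ℍ) :
    ((g • z : ℍ) : ℂ) =
      ((g : Matrix (Fin 2) (Fin 2) ℝ) 0 0 * z + (g : Matrix (Fin 2) (Fin 2) ℝ) 0 1) /
        ((g : Matrix (Fin 2) (Fin 2) ℝ) 1 0 * z + (g : Matrix (Fin 2) (Fin 2) ℝ) 1 1) := by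
  rw [UpperHalfPlane.specialLinearGroup_apply, UpperHalfPlane.coe_mk]
  norm_num

lemma denom_ne (g : SL2R) (z : ℍ) :
    ((g : Matrix (Fin 2) (Fin 2) ℝ) 1 0 : ℂ) * z + (g : Matrix (Fin 2) (Fin 2) ℝ) 1 1 ≠ 0 := by
  have h := UpperHalfPlane.linear_ne_zero (cd :=
    ![(g : Matrix (Fin 2) (Fin 2) ℝ) 1 0, (g : Matrix (Fin 2) (Fin 2) ℝ) 1 1]) z ?_
  · simpa using h
  · intro hc
    have h0 : (g : Matrix (Fin 2) (Fin 2) ℝ) 1 0 = 0 := congrFun hc 0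
    have h1 : (g : Matrix (Fin 2) (Fin 2) ℝ) 1 1 = 0 := congrFun hc 1
    have hd : (g : Matrix (Fin 2) (Fin 2) ℝ).det = 1 := g.2
    rw [Matrix.det_fin_two, h0, h1] at hd
    simp at hd

lemma kMat_smul_I (a : ℝ) : kMat a • UpperHalfPlane.I = UpperHalfPlane.I := by
  have hd := denom_ne (kMat a) UpperHalfPlane.I
  rw [UpperHalfPlane.coe_I] at hd
  ext
  rw [smul_coe, UpperHalfPlane.coe_I, div_eq_iff hd]
  simp only [kMat, Matrix.of_apply, Matrix.cons_val', Matrix.cons_val_zero, Matrix.cons_val_one,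
    Matrix.head_cons, Matrix.empty_val', Matrix.cons_val_fin_one, Matrix.head_fin_const]
  push_cast
  ring_nf
  simp [Complex.I_sq]

lemma fnormSq_kMat_mul (a : ℝ) (h : SL2R) : fnormSq (kMat a * h) = fnormSq h := by
  simp only [fnormSq, Matrix.SpecialLinearGroup.coe_mul]
  simp only [fnormSq, Matrix.SpecialLinearGroup.coe_mul, Matrix.mul_apply, Fin.sum_univ_two,
    kMat, Matrix.of_apply, Matrix.cons_val', Matrix.cons_val_zero, Matrix.cons_val_one,
    Matrix.head_cons, Matrix.empty_val', Matrix.cons_val_fin_one, Matrix.head_fin_const]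
  linear_combination ((h : Matrix (Fin 2) (Fin 2) ℝ) 0 0 ^ 2 + (h : Matrix (Fin 2) (Fin 2) ℝ) 0 1 ^ 2
    + (h : Matrix (Fin 2) (Fin 2) ℝ) 1 0 ^ 2 + (h : Matrix (Fin 2) (Fin 2) ℝ) 1 1 ^ 2)
    * Real.sin_sq_add_cos_sq (a / 2)

lemma fnormSq_mul_kMat (h : SL2R) (a : ℝ) : fnormSq (h * kMat a) = fnormSq h := by
  simp only [fnormSq, Matrix.SpecialLinearGroup.coe_mul]
  simp only [fnormSq, Matrix.SpecialLinearGroup.coe_mul, Matrix.mul_apply, Fin.sum_univ_two,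
    kMat, Matrix.of_apply, Matrix.cons_val', Matrix.cons_val_zero, Matrix.cons_val_one,
    Matrix.head_cons, Matrix.empty_val', Matrix.cons_val_fin_one, Matrix.head_fin_const]
  linear_combination ((h : Matrix (Fin 2) (Fin 2) ℝ) 0 0 ^ 2 + (h : Matrix (Fin 2) (Fin 2) ℝ) 0 1 ^ 2
    + (h : Matrix (Fin 2) (Fin 2) ℝ) 1 0 ^ 2 + (h : Matrix (Fin 2) (Fin 2) ℝ) 1 1 ^ 2)
    * Real.sin_sq_add_cos_sq (a / 2)

lemma aMat_kMat_aMat (t φ l : ℝ) :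
    ((aMat t * kMat φ * aMat l : SL2R) : Matrix (Fin 2) (Fin 2) ℝ) =
      !![Real.exp (t/2) * Real.cos (φ/2) * Real.exp (l/2),
         Real.exp (t/2) * Real.sin (φ/2) * Real.exp (-(l/2));
         -(Real.exp (-(t/2)) * Real.sin (φ/2) * Real.exp (l/2)),
         Real.exp (-(t/2)) * Real.cos (φ/2) * Real.exp (-(l/2))] := by
  ext i j
  simp only [Matrix.SpecialLinearGroup.coe_mul]
  simp only [Matrix.SpecialLinearGroup.coe_mul, aMat, kMat, Matrix.mul_fin_two]
  fin_cases i <;> fin_cases j <;>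
    simp only [Matrix.of_apply, Matrix.cons_val', Matrix.cons_val_zero, Matrix.cons_val_one,
      Matrix.head_cons, Matrix.empty_val', Matrix.cons_val_fin_one, Matrix.head_fin_const] <;>
    · rw [show -t/2 = -(t/2) by ring_nf, show -l/2 = -(l/2) by ring_nf]
      ring_nf

lemma fnormSq_aMat (t : ℝ) : fnormSq (aMat t) = 2 * Real.cosh t := by
  simp only [fnormSq, aMat, Matrix.of_apply, Matrix.cons_val', Matrix.cons_val_zero,
    Matrix.cons_val_one, Matrix.head_cons, Matrix.empty_val', Matrix.cons_val_fin_one,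
    Matrix.head_fin_const, Real.cosh_eq]
  rw [show t = t/2 + t/2 by ring, Real.exp_add, show -(t/2+t/2) = -(t/2) + -(t/2) by ring,
    Real.exp_add]
  ring

lemma cosh_half (x : ℝ) :
    Real.cosh x = (Real.exp (x/2) * Real.exp (x/2) + Real.exp (-(x/2)) * Real.exp (-(x/2))) / 2 := by
  rw [Real.cosh_eq, ← Real.exp_add, ← Real.exp_add]
  ring_nf

lemma sinh_half (x : ℝ) :
    Real.sinh x = (Real.exp (x/2) * Real.exp (x/2) - Real.exp (-(x/2)) * Real.exp (-(x/2))) / 2 := by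
  rw [Real.sinh_eq, ← Real.exp_add, ← Real.exp_add]
  ring_nf

lemma cos_half (x : ℝ) : Real.cos x = 2 * Real.cos (x/2) ^ 2 - 1 := by
  rw [show x = 2 * (x/2) by ring, Real.cos_two_mul]
  ring_nf

lemma sin_half (x : ℝ) : Real.sin x = 2 * Real.sin (x/2) * Real.cos (x/2) := by
  rw [show x = 2 * (x/2) by ring, Real.sin_two_mul]
  ring_nf

lemma fnormSq_aka (t φ l : ℝ) : fnormSq (aMat t * kMat φ * aMat l)
    = 2 * (Real.cosh l * Real.cosh t + Real.cos φ * Real.sinh l * Real.sinh t) := by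
  simp only [fnormSq, aMat_kMat_aMat, Matrix.of_apply, Matrix.cons_val', Matrix.cons_val_zero,
    Matrix.cons_val_one, Matrix.head_cons, Matrix.empty_val', Matrix.cons_val_fin_one,
    Matrix.head_fin_const]
  rw [cosh_half l, cosh_half t, sinh_half l, sinh_half t, cos_half φ]
  linear_combination (Real.exp (t/2) * Real.exp (t/2) * Real.exp (-(l/2)) * Real.exp (-(l/2))
    + Real.exp (-(t/2)) * Real.exp (-(t/2)) * Real.exp (l/2) * Real.exp (l/2))
    * Real.sin_sq_add_cos_sq (φ/2)

lemma add_I_ne (z : ℍ) : (z : ℂ) + Complex.I ≠ 0 := by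
  have him : ((z : ℂ) + Complex.I).im = UpperHalfPlane.im z + 1 := by
    simp [UpperHalfPlane.coe_im]
  intro hc
  rw [hc, Complex.zero_im] at him
  linarith [z.im_pos]

lemma kMat_w (a : ℝ) (z : ℍ) :
    (((kMat a • z : ℍ) : ℂ) - Complex.I) / (((kMat a • z : ℍ) : ℂ) + Complex.I)
      = ((Real.cos (a/2) : ℂ) + Real.sin (a/2) * Complex.I)
          / ((Real.cos (a/2) : ℂ) - Real.sin (a/2) * Complex.I)
        * (((z : ℂ) - Complex.I) / ((z : ℂ) + Complex.I)) := by
  have hd := denom_ne (kMat a) z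
  have hk : ((kMat a : SL2R) : Matrix (Fin 2) (Fin 2) ℝ) =
      !![Real.cos (a/2), Real.sin (a/2); -Real.sin (a/2), Real.cos (a/2)] := rfl
  set c := Real.cos (a/2) with hc
  set s := Real.sin (a/2) with hs
  simp only [hk, Matrix.of_apply, Matrix.cons_val', Matrix.cons_val_zero, Matrix.cons_val_one,
    Matrix.head_cons, Matrix.empty_val', Matrix.cons_val_fin_one, Matrix.head_fin_const] at hd
  push_cast at hd
  have e1 : ((kMat a • z : ℍ) : ℂ) - Complex.I
      = ((c:ℂ) + s * Complex.I) * ((z:ℂ) - Complex.I) / (-(s:ℂ) * z + c) := by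
    rw [smul_coe]
    simp only [hk, Matrix.of_apply, Matrix.cons_val', Matrix.cons_val_zero, Matrix.cons_val_one,
      Matrix.head_cons, Matrix.empty_val', Matrix.cons_val_fin_one, Matrix.head_fin_const]
    push_cast
    rw [eq_div_iff hd, sub_mul, div_mul_cancel₀ _ hd]
    have : Complex.I * Complex.I = -1 := Complex.I_mul_I
    linear_combination ((s:ℂ)) * this
  have e2 : ((kMat a • z : ℍ) : ℂ) + Complex.I
      = ((c:ℂ) - s * Complex.I) * ((z:ℂ) + Complex.I) / (-(s:ℂ) * z + c) := by
    rw [smul_coe]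
    simp only [hk, Matrix.of_apply, Matrix.cons_val', Matrix.cons_val_zero, Matrix.cons_val_one,
      Matrix.head_cons, Matrix.empty_val', Matrix.cons_val_fin_one, Matrix.head_fin_const]
    push_cast
    rw [eq_div_iff hd, add_mul, div_mul_cancel₀ _ hd]
    have : Complex.I * Complex.I = -1 := Complex.I_mul_I
    linear_combination ((s:ℂ)) * this
  rw [e1, e2, div_div_div_comm, div_self hd, div_one, div_mul_div_comm]

lemma aMat_smul_I (t : ℝ) :
    ((aMat t • UpperHalfPlane.I : UpperHalfPlane) : ℂ) = (Real.exp t : ℂ) * Complex.I := by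
  have hd := denom_ne (aMat t) UpperHalfPlane.I
  have hk : ((aMat t : SL2R) : Matrix (Fin 2) (Fin 2) ℝ) =
      !![Real.exp (t/2), 0; 0, Real.exp (-t/2)] := rfl
  rw [smul_coe]
  simp only [hk, Matrix.of_apply, Matrix.cons_val', Matrix.cons_val_zero, Matrix.cons_val_one,
    Matrix.head_cons, Matrix.empty_val', Matrix.cons_val_fin_one, Matrix.head_fin_const,
    UpperHalfPlane.coe_I] at hd ⊢
  rw [div_eq_iff hd]
  have hEEc : ((Real.exp (t/2) : ℂ)) * ((Real.exp (-t/2) : ℂ)) = 1 := by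
    rw [← Complex.ofReal_mul, ← Real.exp_add, show t/2 + -t/2 = 0 by ring, Real.exp_zero,
      Complex.ofReal_one]
  have hsplit : (Real.exp t : ℂ) = (Real.exp (t/2) : ℂ) * (Real.exp (t/2) : ℂ) := by
    rw [← Complex.ofReal_mul, ← Real.exp_add, show t/2 + t/2 = t by ring]
  rw [hsplit]
  simp only [Complex.ofReal_zero, zero_mul, add_zero, zero_add]
  linear_combination (-(Real.exp (t/2) : ℂ) * Complex.I) * hEEc

lemma w_aMat (t : ℝ) :
    (((aMat t • UpperHalfPlane.I : UpperHalfPlane) : ℂ) - Complex.I)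
        / (((aMat t • UpperHalfPlane.I : UpperHalfPlane) : ℂ) + Complex.I)
      = (((Real.exp t - 1) / (Real.exp t + 1) : ℝ) : ℂ) := by
  rw [aMat_smul_I]
  have h1 : (Real.exp t : ℂ) + 1 ≠ 0 := by
    intro hc
    have : ((Real.exp t : ℂ) + 1).re = 0 := by rw [hc]; simp
    simp only [Complex.add_re, Complex.ofReal_re, Complex.one_re] at this
    linarith [Real.exp_pos t]
  have hI : (Complex.I : ℂ) ≠ 0 := Complex.I_ne_zero
  have e1 : (Real.exp t : ℂ) * Complex.I - Complex.I = ((Real.exp t : ℂ) - 1) * Complex.I := by ring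
  have e2 : (Real.exp t : ℂ) * Complex.I + Complex.I = ((Real.exp t : ℂ) + 1) * Complex.I := by ring
  rw [e1, e2, mul_div_mul_right _ _ hI]
  push_cast
  ring

lemma w_frac (A B C D : ℝ) (h : (C:ℂ) * Complex.I + (D:ℂ) ≠ 0) :
    (((A:ℂ) * Complex.I + (B:ℂ)) / ((C:ℂ) * Complex.I + (D:ℂ)) - Complex.I)
      / (((A:ℂ) * Complex.I + (B:ℂ)) / ((C:ℂ) * Complex.I + (D:ℂ)) + Complex.I)
    = (((B + C : ℝ):ℂ) + ((A - D : ℝ):ℂ) * Complex.I)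
      / (((B - C : ℝ):ℂ) + ((A + D : ℝ):ℂ) * Complex.I) := by
  have hI := Complex.I_mul_I
  have e1 : ((A:ℂ) * Complex.I + (B:ℂ)) / ((C:ℂ) * Complex.I + (D:ℂ)) - Complex.I
      = (((B + C : ℝ):ℂ) + ((A - D : ℝ):ℂ) * Complex.I) / ((C:ℂ) * Complex.I + (D:ℂ)) := by
    rw [eq_div_iff h, sub_mul, div_mul_cancel₀ _ h]
    push_cast
    linear_combination (-(C:ℂ)) * hI
  have e2 : ((A:ℂ) * Complex.I + (B:ℂ)) / ((C:ℂ) * Complex.I + (D:ℂ)) + Complex.I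
      = (((B - C : ℝ):ℂ) + ((A + D : ℝ):ℂ) * Complex.I) / ((C:ℂ) * Complex.I + (D:ℂ)) := by
    rw [eq_div_iff h, add_mul, div_mul_cancel₀ _ h]
    push_cast
    linear_combination ((C:ℂ)) * hI
  rw [e1, e2, div_div_div_comm, div_self h, div_one]

lemma cs_ne_plus (a : ℝ) : (Real.cos a : ℂ) + Real.sin a * Complex.I ≠ 0 := by
  rw [Complex.ofReal_cos, Complex.ofReal_sin, ← Complex.exp_mul_I]
  exact Complex.exp_ne_zero _

lemma cs_ne_minus (a : ℝ) : (Real.cos a : ℂ) - Real.sin a * Complex.I ≠ 0 := by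
  have h := cs_ne_plus (-a)
  rw [Real.cos_neg, Real.sin_neg] at h
  intro hc
  apply h
  rw [← hc]
  push_cast
  ring

lemma pair_ne (x y : ℝ) (h : 0 < x^2 + y^2) : (x:ℂ) + (y:ℂ) * Complex.I ≠ 0 := by
  intro hc
  have hre : x = 0 := by
    have := congrArg Complex.re hc
    simpa using this
  have him : y = 0 := by
    have := congrArg Complex.im hc
    simpa using this
  rw [hre, him] at h
  norm_num at h

/-- Lemma 2.2: in the coordinates `g = k_θ a_t k_φ k_{−m}`,
`M = k_m a_ℓ k_ψ`, explicit formulas for `tan(θ_{gM} − θ_g)`, `‖gM‖²` and `‖g‖²`. -/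
theorem tan_angle_difference (t l θ φ m ψ : ℝ) (ht : 0 < t) (hl : 0 < l)
    (h1 : 1 < Real.cosh l * Real.cosh t + Real.cos φ * Real.sinh l * Real.sinh t)
    (h2 : Real.cosh l * Real.sinh t + Real.sinh l * Real.cos φ * Real.cosh t ≠ 0) :
    Real.tan (theta (kMat θ * aMat t * kMat φ * kMat (-m) * (kMat m * aMat l * kMat ψ))
        - theta (kMat θ * aMat t * kMat φ * kMat (-m)))
      = Real.sinh l * Real.sin φ
        / (Real.cosh l * Real.sinh t + Real.sinh l * Real.cos φ * Real.cosh t) ∧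
    fnormSq (kMat θ * aMat t * kMat φ * kMat (-m) * (kMat m * aMat l * kMat ψ))
      = 2 * (Real.cosh l * Real.cosh t + Real.cos φ * Real.sinh l * Real.sinh t) ∧
    fnormSq (kMat θ * aMat t * kMat φ * kMat (-m)) = 2 * Real.cosh t := by
  have h0 : kMat (-m) * kMat m = 1 := by
    rw [kMat_mul, show -m + m = 0 by ring, kMat_zero]
  have hGMeq : kMat θ * aMat t * kMat φ * kMat (-m) * (kMat m * aMat l * kMat ψ)
      = kMat θ * (aMat t * kMat φ * aMat l * kMat ψ) := by
    simp only [mul_assoc]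
    rw [← mul_assoc (kMat (-m)) (kMat m), h0, one_mul]
  refine ⟨?_, ?_, ?_⟩
  · -- the tan formula
    set E := Real.exp (t/2) with hE
    set E' := Real.exp (-(t/2)) with hE'
    set L := Real.exp (l/2) with hL
    set L' := Real.exp (-(l/2)) with hL'
    set cp := Real.cos (φ/2) with hcp
    set sp := Real.sin (φ/2) with hsp
    set p := sp * (E*L' - E'*L) with hp
    set q := cp * (E*L - E'*L') with hq
    set u := sp * (E*L' + E'*L) with hu
    set v := cp * (E*L + E'*L') with hv
    have hEE : E * E' = 1 := by
      rw [hE, hE', ← Real.exp_add, show t/2 + -(t/2) = 0 by ring, Real.exp_zero]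
    have hLL : L * L' = 1 := by
      rw [hL, hL', ← Real.exp_add, show l/2 + -(l/2) = 0 by ring, Real.exp_zero]
    have hsc : sp^2 + cp^2 = 1 := Real.sin_sq_add_cos_sq _
    have hchl : Real.cosh l = (L*L + L'*L')/2 := cosh_half l
    have hcht : Real.cosh t = (E*E + E'*E')/2 := cosh_half t
    have hshl : Real.sinh l = (L*L - L'*L')/2 := sinh_half l
    have hsht : Real.sinh t = (E*E - E'*E')/2 := sinh_half t
    have hcosφ : Real.cos φ = 2*cp^2 - 1 := cos_half φ
    have hsinφ : Real.sin φ = 2*sp*cp := sin_half φ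
    have hpq : p^2 + q^2
        = 2*(Real.cosh l * Real.cosh t + Real.cos φ * Real.sinh l * Real.sinh t) - 2 := by
      rw [hchl, hcht, hshl, hsht, hcosφ, hp, hq]
      linear_combination (E^2*L'^2 + E'^2*L^2 - 2*(E*E'*L*L')) * hsc + (-2*(L*L')) * hEE + (-2) * hLL
    have huv : u^2 + v^2
        = 2*(Real.cosh l * Real.cosh t + Real.cos φ * Real.sinh l * Real.sinh t) + 2 := by
      rw [hchl, hcht, hshl, hsht, hcosφ, hu, hv]
      linear_combination (E^2*L'^2 + E'^2*L^2 + 2*(E*E'*L*L')) * hsc + (2*(L*L')) * hEE + 2 * hLL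
    have hnum : q*u - p*v = 2*(Real.sinh l * Real.sin φ) := by
      rw [hshl, hsinφ, hp, hq, hu, hv]
      linear_combination (2*cp*sp*(L^2 - L'^2)) * hEE
    have hden : p*u + q*v
        = 2*(Real.cosh l * Real.sinh t + Real.sinh l * Real.cos φ * Real.cosh t) := by
      rw [hchl, hcht, hshl, hsht, hcosφ, hp, hq, hu, hv]
      linear_combination (E^2*L'^2 - E'^2*L^2) * hsc
    have hpqpos : 0 < p^2 + q^2 := by rw [hpq]; linarith
    have huvpos : 0 < u^2 + v^2 := by rw [huv]; linarith
    have hdenne : p*u + q*v ≠ 0 := by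
      rw [hden]
      intro hcon
      exact h2 (by linarith)
    -- the base point values
    set r := (Real.exp t - 1)/(Real.exp t + 1) with hr
    have h1t : 1 < Real.exp t := by
      have := Real.exp_lt_exp.mpr ht
      simpa using this
    have hrpos : 0 < r := div_pos (by linarith) (by linarith)
    -- matrix entries of a_t k_φ a_l
    have hPm := aMat_kMat_aMat t φ l
    rw [← hE, ← hE', ← hL, ← hL', ← hcp, ← hsp] at hPm
    have hdP := denom_ne (aMat t * kMat φ * aMat l) UpperHalfPlane.I
    rw [UpperHalfPlane.coe_I] at hdP
    simp only [hPm, Matrix.of_apply, Matrix.cons_val', Matrix.cons_val_zero, Matrix.cons_val_one,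
      Matrix.head_cons, Matrix.empty_val', Matrix.cons_val_fin_one, Matrix.head_fin_const] at hdP
    have hz2 : (((aMat t * kMat φ * aMat l) • UpperHalfPlane.I : UpperHalfPlane) : ℂ)
        = (((E*cp*L : ℝ):ℂ) * Complex.I + ((E*sp*L' : ℝ):ℂ))
          / (((-(E'*sp*L) : ℝ):ℂ) * Complex.I + ((E'*cp*L' : ℝ):ℂ)) := by
      rw [smul_coe, UpperHalfPlane.coe_I]
      simp only [hPm, Matrix.of_apply, Matrix.cons_val', Matrix.cons_val_zero, Matrix.cons_val_one,
        Matrix.head_cons, Matrix.empty_val', Matrix.cons_val_fin_one, Matrix.head_fin_const]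
    have hdP' : ((-(E'*sp*L) : ℝ):ℂ) * Complex.I + ((E'*cp*L' : ℝ):ℂ) ≠ 0 := by
      exact hdP
    have hw2 : ((((aMat t * kMat φ * aMat l) • UpperHalfPlane.I : UpperHalfPlane) : ℂ) - Complex.I)
          / ((((aMat t * kMat φ * aMat l) • UpperHalfPlane.I : UpperHalfPlane) : ℂ) + Complex.I)
        = (((p:ℝ):ℂ) + ((q:ℝ):ℂ) * Complex.I) / (((u:ℝ):ℂ) + ((v:ℝ):ℂ) * Complex.I) := by
      rw [hz2, w_frac _ _ _ _ hdP']
      rw [show E*sp*L' + -(E'*sp*L) = p by rw [hp]; ring,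
        show E*cp*L - E'*cp*L' = q by rw [hq]; ring,
        show E*sp*L' - -(E'*sp*L) = u by rw [hu]; ring,
        show E*cp*L + E'*cp*L' = v by rw [hv]; ring]
    -- rewrite both thetas
    have hGsmul : (kMat θ * aMat t * kMat φ * kMat (-m)) • UpperHalfPlane.I
        = kMat θ • (aMat t • UpperHalfPlane.I) := by
      rw [mul_assoc (kMat θ * aMat t) (kMat φ) (kMat (-m)), kMat_mul, mul_smul, kMat_smul_I, mul_smul]
    have hGMsmul : (kMat θ * aMat t * kMat φ * kMat (-m) * (kMat m * aMat l * kMat ψ))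
          • UpperHalfPlane.I
        = kMat θ • ((aMat t * kMat φ * aMat l) • UpperHalfPlane.I) := by
      rw [hGMeq, mul_smul, mul_smul, kMat_smul_I]
    simp only [theta]
    rw [hGMsmul, hGsmul, kMat_w, kMat_w, hw2, w_aMat]
    set ρ := ((Real.cos (θ/2) : ℂ) + Real.sin (θ/2) * Complex.I)
        / ((Real.cos (θ/2) : ℂ) - Real.sin (θ/2) * Complex.I) with hρ
    have hρne : ρ ≠ 0 := div_ne_zero (cs_ne_plus _) (cs_ne_minus _)
    have hpqne : ((p:ℝ):ℂ) + ((q:ℝ):ℂ) * Complex.I ≠ 0 := pair_ne _ _ hpqpos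
    have huvne : ((u:ℝ):ℂ) + ((v:ℝ):ℂ) * Complex.I ≠ 0 := pair_ne _ _ huvpos
    have hW2ne : (((p:ℝ):ℂ) + ((q:ℝ):ℂ) * Complex.I) / (((u:ℝ):ℂ) + ((v:ℝ):ℂ) * Complex.I) ≠ 0 :=
      div_ne_zero hpqne huvne
    have hrne : ((r:ℝ):ℂ) ≠ 0 := Complex.ofReal_ne_zero.mpr (ne_of_gt hrpos)
    have hu2 : ρ * ((((p:ℝ):ℂ) + ((q:ℝ):ℂ) * Complex.I) / (((u:ℝ):ℂ) + ((v:ℝ):ℂ) * Complex.I)) ≠ 0 :=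
      mul_ne_zero hρne hW2ne
    have hu1 : ρ * ((r:ℝ):ℂ) ≠ 0 := mul_ne_zero hρne hrne
    have hang : Real.tan (Complex.arg (ρ * ((((p:ℝ):ℂ) + ((q:ℝ):ℂ) * Complex.I)
            / (((u:ℝ):ℂ) + ((v:ℝ):ℂ) * Complex.I))) - Complex.arg (ρ * ((r:ℝ):ℂ)))
        = Real.tan (Complex.arg ((ρ * ((((p:ℝ):ℂ) + ((q:ℝ):ℂ) * Complex.I)
            / (((u:ℝ):ℂ) + ((v:ℝ):ℂ) * Complex.I))) / (ρ * ((r:ℝ):ℂ)))) := by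
      rw [← Real.Angle.tan_coe, ← Real.Angle.tan_coe]
      congr 1
      rw [Real.Angle.coe_sub]
      exact (Complex.arg_div_coe_angle hu2 hu1).symm
    rw [hang, mul_div_mul_left _ _ hρne, div_div, Complex.tan_arg]
    have hDform : (((u:ℝ):ℂ) + ((v:ℝ):ℂ) * Complex.I) * ((r:ℝ):ℂ)
        = ((u*r : ℝ):ℂ) + ((v*r : ℝ):ℂ) * Complex.I := by push_cast; ring
    rw [hDform, Complex.div_im, Complex.div_re]
    simp only [Complex.add_re, Complex.add_im, Complex.ofReal_re, Complex.ofReal_im,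
      Complex.mul_re, Complex.mul_im, Complex.I_re, Complex.I_im, Complex.normSq_apply,
      mul_zero, zero_mul, mul_one, sub_zero, zero_add, add_zero, zero_sub]
    have hNne : (u*r)*(u*r) + (v*r)*(v*r) ≠ 0 := by
      have hform : (u*r)*(u*r) + (v*r)*(v*r) = (u^2+v^2)*r^2 := by ring
      rw [hform]
      exact mul_ne_zero (ne_of_gt huvpos) (pow_ne_zero _ (ne_of_gt hrpos))
    rw [div_sub_div_same, ← add_div, div_div_div_comm, div_self hNne, div_one]
    rw [show q*(u*r) - p*(v*r) = (2*(Real.sinh l * Real.sin φ))*r by linear_combination r * hnum,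
      show p*(u*r) + q*(v*r)
        = (2*(Real.cosh l * Real.sinh t + Real.sinh l * Real.cos φ * Real.cosh t))*r by
          linear_combination r * hden,
      mul_div_mul_right _ _ (ne_of_gt hrpos), mul_div_mul_left _ _ (two_ne_zero)]
  · rw [hGMeq, fnormSq_kMat_mul, fnormSq_mul_kMat, fnormSq_aka]
  · rw [fnormSq_mul_kMat, fnormSq_mul_kMat, fnormSq_kMat_mul, fnormSq_aMat]
end Helpers
end
end

section
/- There exist constants C > 0 and δ₀ ∈ (0,1) such that for all δ ∈ (0, δ₀) and all g, h ∈ SL₂(ℝ) with ‖g‖ > 3 and ‖h‖² ≤ 2cosh δ, the following hold: (i) |‖gh‖ − ‖g‖| ≤ C·δ·‖g‖ and |‖hg‖ − ‖g‖| ≤ C·δ·‖g‖; (ii) |arccosh(‖gh‖²/2) − arccosh(‖g‖²/2)| ≤ C·δ and |arccosh(‖hg‖²/2) − arccosh(‖g‖²/2)| ≤ C·δ; (iii) if moreover g·i ≠ i and gh·i ≠ i, then |θ_g − θ_{gh}| ≤ C·δ/‖g‖². -/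
open Matrix MeasureTheory Real Filter Topology
open scoped MatrixGroups Pointwise

noncomputable section

/-! ### Auxiliary lemmas for `perturbation_estimates` -/

section PerturbationAux

theorem keyrow (a b c d x y L : ℝ) (hdet : a*d - b*c = 1) (hL : 1 ≤ L)
    (hT : (a^2+b^2+c^2+d^2)*L ≤ L^2+1) :
    (x*a+y*c)^2+(x*b+y*d)^2 ≤ L*(x^2+y^2) := by
  set A := L - (a^2+b^2) with hA
  set B := L - (c^2+d^2) with hB
  have hP : A * B ≥ (a*c+b*d)^2 := by
    have : A * B = L^2 - (a^2+b^2+c^2+d^2)*L + (a^2+b^2)*(c^2+d^2) := by ring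
    nlinarith [sq_nonneg (a*d-b*c), sq_nonneg (a*c+b*d)]
  have hS : 0 ≤ A + B := by nlinarith [sq_nonneg (L-1)]
  have hA0 : 0 ≤ A := by nlinarith [sq_nonneg (a*c+b*d)]
  have hB0 : 0 ≤ B := by nlinarith [sq_nonneg (a*c+b*d)]
  have h1 : (2*(a*c+b*d)*x*y)^2 ≤ (A*x^2+B*y^2)^2 := by
    nlinarith [sq_nonneg (A*x^2 - B*y^2), mul_nonneg (mul_nonneg hA0 hB0) (sq_nonneg (x*y)),
      mul_le_mul_of_nonneg_right hP (sq_nonneg (x*y))]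
  have h2 : 0 ≤ A*x^2+B*y^2 := by positivity
  have h3 : 2*(a*c+b*d)*x*y ≤ A*x^2+B*y^2 := by nlinarith [h1, h2]
  nlinarith [h3]

lemma det_entries (g : SL2R) :
    (g : Matrix (Fin 2) (Fin 2) ℝ) 0 0 * (g : Matrix (Fin 2) (Fin 2) ℝ) 1 1
      - (g : Matrix (Fin 2) (Fin 2) ℝ) 0 1 * (g : Matrix (Fin 2) (Fin 2) ℝ) 1 0 = 1 := by
  have := g.2
  rw [Matrix.det_fin_two] at this
  linarith

lemma fnormSq_nonneg (g : SL2R) : 0 ≤ fnormSq g := by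
  unfold fnormSq; positivity

lemma fnormSq_mul_le (g h : SL2R) {L : ℝ} (hL : 1 ≤ L) (hh : fnormSq h * L ≤ L^2 + 1) :
    fnormSq (g * h) ≤ L * fnormSq g ∧ fnormSq (h * g) ≤ L * fnormSq g ∧
    fnormSq g ≤ L * fnormSq (g * h) ∧ fnormSq g ≤ L * fnormSq (h * g) := by
  have hdg := det_entries g
  have hdh := det_entries h
  set a := (h : Matrix (Fin 2) (Fin 2) ℝ) 0 0
  set b := (h : Matrix (Fin 2) (Fin 2) ℝ) 0 1
  set c := (h : Matrix (Fin 2) (Fin 2) ℝ) 1 0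
  set d := (h : Matrix (Fin 2) (Fin 2) ℝ) 1 1
  set p := (g : Matrix (Fin 2) (Fin 2) ℝ) 0 0
  set q := (g : Matrix (Fin 2) (Fin 2) ℝ) 0 1
  set r := (g : Matrix (Fin 2) (Fin 2) ℝ) 1 0
  set s := (g : Matrix (Fin 2) (Fin 2) ℝ) 1 1
  have hfg : fnormSq g = p^2+q^2+r^2+s^2 := by simp only [fnormSq]; rfl
  have hfh : fnormSq h = a^2+b^2+c^2+d^2 := by simp only [fnormSq]; rfl
  have hgh : fnormSq (g * h) = (p*a+q*c)^2+(p*b+q*d)^2+((r*a+s*c)^2+(r*b+s*d)^2) := by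
    simp only [fnormSq, Matrix.SpecialLinearGroup.coe_mul, Matrix.mul_apply, Fin.sum_univ_two]
    ring
  have hhg : fnormSq (h * g) = (p*a+r*b)^2+(q*a+s*b)^2+((p*c+r*d)^2+(q*c+s*d)^2) := by
    simp only [fnormSq, Matrix.SpecialLinearGroup.coe_mul, Matrix.mul_apply, Fin.sum_univ_two]
    ring
  rw [hfh] at hh
  refine ⟨?_, ?_, ?_, ?_⟩
  · rw [hgh, hfg]
    have k1 := keyrow a b c d p q L hdh hL hh
    have k2 := keyrow a b c d r s L hdh hL hh
    ring_nf at k1 k2 ⊢; linarith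
  · rw [hhg, hfg]
    have k1 := keyrow a c b d p r L (by linarith) hL (by linarith)
    have k2 := keyrow a c b d q s L (by linarith) hL (by linarith)
    ring_nf at k1 k2 ⊢; linarith
  · rw [hgh, hfg]
    have hT2 : (d^2+(-b)^2+(-c)^2+a^2)*L ≤ L^2+1 := by ring_nf; ring_nf at hh; linarith
    have k1 := keyrow d (-b) (-c) a (p*a+q*c) (p*b+q*d) L (by linear_combination hdh) hL hT2
    have k2 := keyrow d (-b) (-c) a (r*a+s*c) (r*b+s*d) L (by linear_combination hdh) hL hT2
    have e1 : (p*a+q*c)*d + (p*b+q*d)*(-c) = p := by linear_combination p * hdh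
    have e2 : (p*a+q*c)*(-b) + (p*b+q*d)*a = q := by linear_combination q * hdh
    have e3 : (r*a+s*c)*d + (r*b+s*d)*(-c) = r := by linear_combination r * hdh
    have e4 : (r*a+s*c)*(-b) + (r*b+s*d)*a = s := by linear_combination s * hdh
    rw [e1, e2] at k1; rw [e3, e4] at k2
    ring_nf at k1 k2 ⊢; linarith
  · rw [hhg, hfg]
    have hT2 : (d^2+(-c)^2+(-b)^2+a^2)*L ≤ L^2+1 := by ring_nf; ring_nf at hh; linarith
    have k1 := keyrow d (-c) (-b) a (p*a+r*b) (p*c+r*d) L (by linear_combination hdh) hL hT2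
    have k2 := keyrow d (-c) (-b) a (q*a+s*b) (q*c+s*d) L (by linear_combination hdh) hL hT2
    have e1 : (p*a+r*b)*d + (p*c+r*d)*(-b) = p := by linear_combination p * hdh
    have e2 : (p*a+r*b)*(-c) + (p*c+r*d)*a = r := by linear_combination r * hdh
    have e3 : (q*a+s*b)*d + (q*c+s*d)*(-b) = q := by linear_combination q * hdh
    have e4 : (q*a+s*b)*(-c) + (q*c+s*d)*a = s := by linear_combination s * hdh
    rw [e1, e2] at k1; rw [e3, e4] at k2
    ring_nf at k1 k2 ⊢; linarith

lemma inv_le_of_one_le_mul' {a b : ℝ} (ha : 0 < a) (h : 1 ≤ b * a) : a⁻¹ ≤ b := by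
  calc a⁻¹ = a⁻¹ * 1 := by ring
    _ ≤ a⁻¹ * (b*a) := mul_le_mul_of_nonneg_left h (inv_pos.mpr ha).le
    _ = b := by field_simp

lemma le_inv_of_mul_le' {a b : ℝ} (ha : 0 < a) (h : b * a ≤ 1) : b ≤ a⁻¹ := by
  calc b = a⁻¹ * (b*a) := by field_simp
    _ ≤ a⁻¹ * 1 := mul_le_mul_of_nonneg_left h (inv_pos.mpr ha).le
    _ = a⁻¹ := by ring

lemma exp_le_inv_one_sub {x : ℝ} (hx : x < 1) : exp x ≤ (1 - x)⁻¹ := by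
  have h1 : 0 < 1 - x := by linarith
  apply le_inv_of_mul_le' h1
  have := Real.add_one_le_exp (-x)
  calc exp x * (1 - x) ≤ exp x * exp (-x) := by
        apply mul_le_mul_of_nonneg_left _ (exp_pos x).le; linarith
    _ = 1 := by rw [← Real.exp_add]; simp

lemma exp_half_le {x : ℝ} (h0 : 0 ≤ x) (h1 : x ≤ 1) : exp (x/2) ≤ 1 + x := by
  have := exp_le_inv_one_sub (show x/2 < 1 by linarith)
  have h3 : (1 - x/2)⁻¹ ≤ 1 + x := by
    apply inv_le_of_one_le_mul' (by linarith)
    nlinarith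
  linarith

lemma exp_neg_le {x : ℝ} (h0 : 0 ≤ x) : exp (-x) ≤ 1 - x + x^2 := by
  have h4 : exp (-x) ≤ (1 + x)⁻¹ := by
    apply le_inv_of_mul_le' (by linarith)
    have := Real.add_one_le_exp x
    calc exp (-x) * (1+x) ≤ exp (-x) * exp x := by
          apply mul_le_mul_of_nonneg_left _ (exp_pos _).le; linarith
      _ = 1 := by rw [← Real.exp_add]; simp
  have h5 : (1 + x)⁻¹ ≤ 1 - x + x^2 := by
    apply inv_le_of_one_le_mul' (by linarith)
    nlinarith
  linarith

lemma cosh_le' {x : ℝ} (h0 : 0 ≤ x) (h1 : x ≤ 1/2) : 2 * Real.cosh x ≤ 2 + 3*x^2 := by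
  rw [Real.cosh_eq]
  have h2 : exp x ≤ 1 + x + 2*x^2 := by
    have := exp_le_inv_one_sub (show x < 1 by linarith)
    have h3 : (1 - x)⁻¹ ≤ 1 + x + 2*x^2 := by
      apply inv_le_of_one_le_mul' (by linarith)
      nlinarith
    linarith
  have h3 := exp_neg_le h0
  linarith

lemma arccosh_le {x y δ : ℝ} (hδ : 0 ≤ δ) (hx2 : 2 ≤ x^2) (hx : 1 ≤ x) (hy : 1 ≤ y)
    (hxy : y ≤ exp δ * x) : arccosh y ≤ 2*δ + arccosh x := by
  unfold arccosh
  have hx1 : (0:ℝ) ≤ x^2 - 1 := by nlinarith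
  have hy1 : (0:ℝ) ≤ y^2 - 1 := by nlinarith
  have he : (1:ℝ) ≤ exp δ := Real.one_le_exp hδ
  have hee : rexp (2*δ) = rexp δ ^ 2 := by
    rw [show 2*δ = δ + δ by ring, Real.exp_add]; ring
  have key : y + Real.sqrt (y^2-1) ≤ exp (2*δ) * (x + Real.sqrt (x^2-1)) := by
    have h1 : y ≤ exp (2*δ) * x := by
      calc y ≤ exp δ * x := hxy
        _ ≤ exp (2*δ) * x := by
            apply mul_le_mul_of_nonneg_right _ (by linarith)
            exact Real.exp_le_exp.mpr (by linarith)
    have h2 : Real.sqrt (y^2-1) ≤ exp (2*δ) * Real.sqrt (x^2-1) := by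
      rw [show exp (2*δ) * Real.sqrt (x^2-1) = Real.sqrt ((exp (2*δ))^2 * (x^2-1)) by
        rw [Real.sqrt_mul (by positivity), Real.sqrt_sq (exp_pos _).le]]
      apply Real.sqrt_le_sqrt
      have hyx : y^2 ≤ (exp δ)^2 * x^2 := by nlinarith [exp_pos δ]
      have h2e : (1:ℝ) ≤ exp (2*δ) := Real.one_le_exp (by linarith)
      have step : exp (2*δ) * x^2 - 1 ≤ (exp (2*δ))^2 * (x^2 - 1) := by
        nlinarith [sq_nonneg (exp (2*δ) - 1)]
      rw [hee] at step ⊢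
      nlinarith
    linarith
  have hpos : (0:ℝ) < y + Real.sqrt (y^2-1) := by positivity
  calc Real.log (y + Real.sqrt (y^2-1)) ≤ Real.log (exp (2*δ) * (x + Real.sqrt (x^2-1))) :=
        Real.log_le_log hpos key
    _ = 2*δ + Real.log (x + Real.sqrt (x^2-1)) := by
        rw [Real.log_mul (by positivity) (by positivity), Real.log_exp]

/-- The numerator of the Cayley transform of `g·i`. -/
def Nc (g : SL2R) : ℂ :=
  ((g : Matrix (Fin 2) (Fin 2) ℝ) 0 1 + (g : Matrix (Fin 2) (Fin 2) ℝ) 1 0 : ℝ)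
    + ((g : Matrix (Fin 2) (Fin 2) ℝ) 0 0 - (g : Matrix (Fin 2) (Fin 2) ℝ) 1 1 : ℝ) * Complex.I

/-- The denominator of the Cayley transform of `g·i`. -/
def Dc (g : SL2R) : ℂ :=
  ((g : Matrix (Fin 2) (Fin 2) ℝ) 0 1 - (g : Matrix (Fin 2) (Fin 2) ℝ) 1 0 : ℝ)
    + ((g : Matrix (Fin 2) (Fin 2) ℝ) 0 0 + (g : Matrix (Fin 2) (Fin 2) ℝ) 1 1 : ℝ) * Complex.I

lemma normSq_Nc (g : SL2R) : Complex.normSq (Nc g) = fnormSq g - 2 := by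
  have h := det_entries g
  simp [Nc, fnormSq, Complex.normSq_apply]
  ring_nf
  nlinarith [h]

lemma normSq_Dc (g : SL2R) : Complex.normSq (Dc g) = fnormSq g + 2 := by
  have h := det_entries g
  simp [Dc, fnormSq, Complex.normSq_apply]
  ring_nf
  nlinarith [h]

lemma Dc_ne_zero (g : SL2R) : Dc g ≠ 0 := by
  intro h
  have := normSq_Dc g
  rw [h] at this
  simp [fnormSq] at this
  nlinarith [sq_nonneg ((g : Matrix (Fin 2) (Fin 2) ℝ) 0 0),
    sq_nonneg ((g : Matrix (Fin 2) (Fin 2) ℝ) 0 1),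
    sq_nonneg ((g : Matrix (Fin 2) (Fin 2) ℝ) 1 0),
    sq_nonneg ((g : Matrix (Fin 2) (Fin 2) ℝ) 1 1)]

lemma coe_smul_I (g : SL2R) :
    ((g • UpperHalfPlane.I : UpperHalfPlane) : ℂ)
      = (((g : Matrix (Fin 2) (Fin 2) ℝ) 0 0 : ℂ) * Complex.I + ((g : Matrix (Fin 2) (Fin 2) ℝ) 0 1 : ℂ))
        / (((g : Matrix (Fin 2) (Fin 2) ℝ) 1 0 : ℂ) * Complex.I + ((g : Matrix (Fin 2) (Fin 2) ℝ) 1 1 : ℂ)) := by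
  rw [UpperHalfPlane.specialLinearGroup_apply]
  simp [UpperHalfPlane.coe_I]

lemma denom_I_ne_zero (g : SL2R) :
    (((g : Matrix (Fin 2) (Fin 2) ℝ) 1 0 : ℂ) * Complex.I + ((g : Matrix (Fin 2) (Fin 2) ℝ) 1 1 : ℂ)) ≠ 0 := by
  intro h
  rw [Complex.ext_iff] at h
  simp at h
  have := det_entries g
  rw [h.1, h.2] at this
  simp at this

lemma theta_eq (g : SL2R) : theta g = Complex.arg (Nc g / Dc g) := by
  unfold theta
  congr 1
  rw [coe_smul_I]
  have h1 := denom_I_ne_zero g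
  have h2 := Dc_ne_zero g
  unfold Nc Dc at *
  generalize ((g : Matrix (Fin 2) (Fin 2) ℝ) 0 0) = a at *
  generalize ((g : Matrix (Fin 2) (Fin 2) ℝ) 0 1) = b at *
  generalize ((g : Matrix (Fin 2) (Fin 2) ℝ) 1 0) = c at *
  generalize ((g : Matrix (Fin 2) (Fin 2) ℝ) 1 1) = d at *
  have e1 : ((a:ℂ) * Complex.I + (b:ℂ)) / ((c:ℂ) * Complex.I + (d:ℂ)) - Complex.I
      = (((b + c : ℝ) : ℂ) + ((a - d : ℝ) : ℂ) * Complex.I) / ((c:ℂ) * Complex.I + (d:ℂ)) := by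
    rw [eq_div_iff h1, sub_mul, div_mul_cancel₀ _ h1]
    push_cast
    linear_combination (-(c:ℂ)) * Complex.I_sq
  have e2 : ((a:ℂ) * Complex.I + (b:ℂ)) / ((c:ℂ) * Complex.I + (d:ℂ)) + Complex.I
      = (((b - c : ℝ) : ℂ) + ((a + d : ℝ) : ℂ) * Complex.I) / ((c:ℂ) * Complex.I + (d:ℂ)) := by
    rw [eq_div_iff h1, add_mul, div_mul_cancel₀ _ h1]
    push_cast
    linear_combination (c:ℂ) * Complex.I_sq
  rw [e1, e2, div_div_div_cancel_right₀ h1]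

lemma detC_entries (g : SL2R) :
    ((g : Matrix (Fin 2) (Fin 2) ℝ) 0 0 : ℂ) * ((g : Matrix (Fin 2) (Fin 2) ℝ) 1 1 : ℂ)
      - ((g : Matrix (Fin 2) (Fin 2) ℝ) 0 1 : ℂ) * ((g : Matrix (Fin 2) (Fin 2) ℝ) 1 0 : ℂ) = 1 := by
  exact_mod_cast congrArg (Complex.ofReal) (det_entries g)

lemma key_identity (g h : SL2R) :
    Nc (g*h) * Dc g - Nc g * Dc (g*h) = 2 * Complex.I * Nc h := by
  have hd := detC_entries g
  simp only [Nc, Dc, Matrix.SpecialLinearGroup.coe_mul, Matrix.mul_apply, Fin.sum_univ_two]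
  push_cast
  linear_combination (2 * Complex.I *
    (((h : Matrix (Fin 2) (Fin 2) ℝ) 0 1 : ℂ) + ((h : Matrix (Fin 2) (Fin 2) ℝ) 1 0 : ℂ)
      + (((h : Matrix (Fin 2) (Fin 2) ℝ) 0 0 : ℂ) - ((h : Matrix (Fin 2) (Fin 2) ℝ) 1 1 : ℂ)) * Complex.I)) * hd
    + (2*(-(((g : Matrix (Fin 2) (Fin 2) ℝ) 0 0 : ℂ) * ((h : Matrix (Fin 2) (Fin 2) ℝ) 0 1 : ℂ) * ((g : Matrix (Fin 2) (Fin 2) ℝ) 1 0 : ℂ))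
      - ((g : Matrix (Fin 2) (Fin 2) ℝ) 0 1 : ℂ) * ((h : Matrix (Fin 2) (Fin 2) ℝ) 1 1 : ℂ) * ((g : Matrix (Fin 2) (Fin 2) ℝ) 1 0 : ℂ)
      + ((g : Matrix (Fin 2) (Fin 2) ℝ) 0 1 : ℂ) * ((g : Matrix (Fin 2) (Fin 2) ℝ) 1 0 : ℂ) * ((h : Matrix (Fin 2) (Fin 2) ℝ) 0 0 : ℂ)
      + ((g : Matrix (Fin 2) (Fin 2) ℝ) 0 1 : ℂ) * ((g : Matrix (Fin 2) (Fin 2) ℝ) 1 1 : ℂ) * ((h : Matrix (Fin 2) (Fin 2) ℝ) 1 0 : ℂ))) * Complex.I_sq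

lemma u_sub_one (g h : SL2R) (hD : Dc g ≠ 0) (hD' : Dc (g*h) ≠ 0) (hN' : Nc (g*h) ≠ 0) :
    (Nc g / Dc g) / (Nc (g*h) / Dc (g*h)) - 1
      = -(2 * Complex.I * Nc h) / (Dc g * Nc (g*h)) := by
  have hk := key_identity g h
  field_simp
  linear_combination (-1 : ℂ) * hk

lemma smul_I_of_Nc_zero (g : SL2R) (h : Nc g = 0) : g • UpperHalfPlane.I = UpperHalfPlane.I := by
  have h' : (g : Matrix (Fin 2) (Fin 2) ℝ) 0 1 + (g : Matrix (Fin 2) (Fin 2) ℝ) 1 0 = 0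
      ∧ (g : Matrix (Fin 2) (Fin 2) ℝ) 0 0 - (g : Matrix (Fin 2) (Fin 2) ℝ) 1 1 = 0 := by
    unfold Nc at h
    rw [Complex.ext_iff] at h
    simpa using h
  apply UpperHalfPlane.ext
  rw [coe_smul_I, UpperHalfPlane.coe_I, div_eq_iff (denom_I_ne_zero g)]
  obtain ⟨h1, h2⟩ := h'
  have hb : ((g : Matrix (Fin 2) (Fin 2) ℝ) 0 1 : ℂ) = -((g : Matrix (Fin 2) (Fin 2) ℝ) 1 0 : ℂ) := by
    exact_mod_cast congrArg Complex.ofReal (by linarith : (g : Matrix (Fin 2) (Fin 2) ℝ) 0 1 = -(g : Matrix (Fin 2) (Fin 2) ℝ) 1 0)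
  have ha : ((g : Matrix (Fin 2) (Fin 2) ℝ) 0 0 : ℂ) = ((g : Matrix (Fin 2) (Fin 2) ℝ) 1 1 : ℂ) := by
    exact_mod_cast congrArg Complex.ofReal (by linarith : (g : Matrix (Fin 2) (Fin 2) ℝ) 0 0 = (g : Matrix (Fin 2) (Fin 2) ℝ) 1 1)
  rw [hb, ha]
  linear_combination (-((g : Matrix (Fin 2) (Fin 2) ℝ) 1 0 : ℂ)) * Complex.I_sq

lemma arg_le_of_abs_sub_one_le {u : ℂ} (hu : ‖u - 1‖ ≤ 1/2) :
    |Complex.arg u| ≤ π * ‖u - 1‖ := by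
  have hre1 : |(u-1).re| ≤ ‖u-1‖ := Complex.abs_re_le_norm _
  have hre2 : (u-1).re = u.re - 1 := by simp
  have hre : (1:ℝ)/2 ≤ u.re := by
    rw [hre2] at hre1
    cases' abs_le.mp hre1 with h1 h2
    linarith
  have habs : (1:ℝ)/2 ≤ ‖u‖ := le_trans hre (Complex.re_le_norm u)
  have habspos : (0:ℝ) < ‖u‖ := by linarith
  have harg2 : |Complex.arg u| ≤ π/2 := Complex.abs_arg_le_pi_div_two_iff.mpr (by linarith)
  have him : |u.im| ≤ ‖u-1‖ := by
    have : (u-1).im = u.im := by simp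
    rw [← this]; exact Complex.abs_im_le_norm _
  have habs1 : (0:ℝ) ≤ ‖u-1‖ := norm_nonneg _
  have hsin := Real.mul_le_sin (abs_nonneg (Complex.arg u)) harg2
  have hsin_eq : Real.sin |Complex.arg u| = |u.im| / ‖u‖ := by
    rcases le_or_gt 0 (Complex.arg u) with h | h
    · have h0 : 0 ≤ u.im := Complex.arg_nonneg_iff.mp h
      rw [abs_of_nonneg h, Complex.sin_arg, abs_of_nonneg h0]
    · have h0 : u.im < 0 := Complex.arg_neg_iff.mp h
      rw [abs_of_neg h, Real.sin_neg, Complex.sin_arg, abs_of_neg h0]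
      ring
  rw [hsin_eq] at hsin
  have hdiv : |u.im| / ‖u‖ ≤ 2 * ‖u-1‖ := by
    rw [div_le_iff₀ habspos]
    nlinarith
  have hπ := Real.pi_pos
  calc |Complex.arg u| = (π/2) * (2/π * |Complex.arg u|) := by field_simp
    _ ≤ (π/2) * (2 * ‖u-1‖) := by
        apply mul_le_mul_of_nonneg_left _ (by positivity)
        linarith
    _ = π * ‖u-1‖ := by ring

lemma part_i_aux {T T' δ : ℝ} (hδ0 : 0 < δ) (hδ : δ ≤ 1) (hT : 0 ≤ T) (hT' : 0 ≤ T')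
    (h1 : T' ≤ exp δ * T) (h2 : T ≤ exp δ * T') :
    |Real.sqrt T' - Real.sqrt T| ≤ 2*δ*Real.sqrt T := by
  have hhalf : Real.exp δ = Real.exp (δ/2) ^ 2 := by
    rw [show δ = δ/2 + δ/2 by ring, Real.exp_add]; ring_nf
  have he := exp_half_le hδ0.le hδ
  have hs1 : Real.sqrt (exp δ * T) = Real.exp (δ/2) * Real.sqrt T := by
    rw [Real.sqrt_mul (Real.exp_pos δ).le, hhalf, Real.sqrt_sq (Real.exp_pos _).le]
  have hs2 : Real.sqrt (exp δ * T') = Real.exp (δ/2) * Real.sqrt T' := by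
    rw [Real.sqrt_mul (Real.exp_pos δ).le, hhalf, Real.sqrt_sq (Real.exp_pos _).le]
  have s1 : Real.sqrt T' ≤ (1+δ) * Real.sqrt T := by
    calc Real.sqrt T' ≤ Real.sqrt (exp δ * T) := Real.sqrt_le_sqrt h1
      _ = Real.exp (δ/2) * Real.sqrt T := hs1
      _ ≤ (1+δ) * Real.sqrt T := mul_le_mul_of_nonneg_right he (Real.sqrt_nonneg T)
  have s2 : Real.sqrt T ≤ (1+δ) * Real.sqrt T' := by
    calc Real.sqrt T ≤ Real.sqrt (exp δ * T') := Real.sqrt_le_sqrt h2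
      _ = Real.exp (δ/2) * Real.sqrt T' := hs2
      _ ≤ (1+δ) * Real.sqrt T' := mul_le_mul_of_nonneg_right he (Real.sqrt_nonneg T')
  rw [abs_sub_le_iff]
  constructor
  · nlinarith [Real.sqrt_nonneg T]
  · nlinarith [Real.sqrt_nonneg T, Real.sqrt_nonneg T', s1, s2]

lemma part_ii_aux {T T' δ : ℝ} (hδ0 : 0 < δ) (hδ : δ ≤ 1/10) (hT9 : 9 < T)
    (h1 : T' ≤ exp δ * T) (h2 : T ≤ exp δ * T') :
    |arccosh (T'/2) - arccosh (T/2)| ≤ 4*δ := by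
  have hneg : 1 - δ ≤ Real.exp (-δ) := by linarith [Real.add_one_le_exp (-δ)]
  have hLexp : Real.exp (-δ) * Real.exp δ = 1 := by rw [← Real.exp_add]; simp
  have hT'lb : (1 - δ) * T ≤ T' := by
    have k := mul_le_mul_of_nonneg_left h2 (Real.exp_pos (-δ)).le
    have k2 : Real.exp (-δ) * (Real.exp δ * T') = T' := by
      rw [← mul_assoc, hLexp, one_mul]
    rw [k2] at k
    nlinarith [mul_le_mul_of_nonneg_right hneg (by linarith : (0:ℝ) ≤ T)]
  have hT'3 : 3 ≤ T' := by nlinarith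
  have d1 : arccosh (T'/2) ≤ 2*δ + arccosh (T/2) := by
    apply arccosh_le hδ0.le (by nlinarith) (by nlinarith) (by nlinarith)
    nlinarith [h1]
  have d2 : arccosh (T/2) ≤ 2*δ + arccosh (T'/2) := by
    apply arccosh_le hδ0.le (by nlinarith) (by nlinarith) (by nlinarith)
    nlinarith [h2]
  rw [abs_sub_le_iff]
  exact ⟨by linarith, by linarith⟩

end PerturbationAux

set_option maxHeartbeats 2000000 in
/-- Lemma 2.4: perturbation estimates for the norm, the displacement
`ℓ = arccosh(‖·‖²/2)` and the angle, under multiplication by an element of `B_{δ₁}`. -/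
theorem perturbation_estimates :
    ∃ C > (0:ℝ), ∃ δ₀ : ℝ, 0 < δ₀ ∧ δ₀ < 1 ∧
      ∀ δ : ℝ, 0 < δ → δ < δ₀ → ∀ g h : SL2R,
        3 < fnorm g → fnormSq h ≤ 2 * Real.cosh δ →
        (|fnorm (g * h) - fnorm g| ≤ C * δ * fnorm g ∧
         |fnorm (h * g) - fnorm g| ≤ C * δ * fnorm g) ∧
        (|arccosh (fnormSq (g * h) / 2) - arccosh (fnormSq g / 2)| ≤ C * δ ∧
         |arccosh (fnormSq (h * g) / 2) - arccosh (fnormSq g / 2)| ≤ C * δ) ∧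
        (g • UpperHalfPlane.I ≠ UpperHalfPlane.I →
          (g * h) • UpperHalfPlane.I ≠ UpperHalfPlane.I →
          angDist (theta g) (theta (g * h)) ≤ C * δ / fnormSq g) := by
  refine ⟨40, by norm_num, 1/10, by norm_num, by norm_num, ?_⟩
  intro δ hδ0 hδ1 g h hg hh
  have hδ10 : δ ≤ 1/10 := by linarith
  have hδhalf : δ ≤ 1/2 := by linarith
  have hδ1' : δ ≤ 1 := by linarith
  have hT0 : 0 ≤ fnormSq g := fnormSq_nonneg g
  have hT9 : 9 < fnormSq g := by
    unfold fnorm at hg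
    nlinarith [Real.sq_sqrt hT0, Real.sqrt_nonneg (fnormSq g)]
  have hL1 : (1:ℝ) ≤ Real.exp δ := Real.one_le_exp hδ0.le
  have hLexp : Real.exp δ * Real.exp (-δ) = 1 := by rw [← Real.exp_add]; simp
  have hLc : fnormSq h * Real.exp δ ≤ (Real.exp δ)^2 + 1 := by
    have h2 : 2 * Real.cosh δ * Real.exp δ = (Real.exp δ)^2 + Real.exp δ * Real.exp (-δ) := by
      rw [Real.cosh_eq]; ring
    rw [hLexp] at h2
    nlinarith [Real.exp_pos δ, hh]
  obtain ⟨B1, B2, B3, B4⟩ := fnormSq_mul_le g h hL1 hLc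
  have hTgh0 : 0 ≤ fnormSq (g*h) := fnormSq_nonneg _
  have hThg0 : 0 ≤ fnormSq (h*g) := fnormSq_nonneg _
  have hprod : 0 ≤ δ * Real.sqrt (fnormSq g) := mul_nonneg hδ0.le (Real.sqrt_nonneg _)
  refine ⟨⟨?_, ?_⟩, ⟨?_, ?_⟩, ?_⟩
  · have := part_i_aux hδ0 hδ1' hT0 hTgh0 B1 B3
    unfold fnorm
    linarith
  · have := part_i_aux hδ0 hδ1' hT0 hThg0 B2 B4
    unfold fnorm
    linarith
  · have := part_ii_aux hδ0 hδ10 hT9 B1 B3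
    linarith
  · have := part_ii_aux hδ0 hδ10 hT9 B2 B4
    linarith
  · intro hgI hghI
    have hN : Nc g ≠ 0 := fun h0 => hgI (smul_I_of_Nc_zero g h0)
    have hN' : Nc (g*h) ≠ 0 := fun h0 => hghI (smul_I_of_Nc_zero (g*h) h0)
    have hD := Dc_ne_zero g
    have hD' := Dc_ne_zero (g*h)
    set w := Nc g / Dc g with hw_def
    set w' := Nc (g*h) / Dc (g*h) with hw'_def
    have hw : w ≠ 0 := div_ne_zero hN hD
    have hw' : w' ≠ 0 := div_ne_zero hN' hD'
    have hu := u_sub_one g h hD hD' hN'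
    -- lower bound on fnormSq (g*h)
    have hneg : 1 - δ ≤ Real.exp (-δ) := by linarith [Real.add_one_le_exp (-δ)]
    have hT'lb : (1 - δ) * fnormSq g ≤ fnormSq (g*h) := by
      have k := mul_le_mul_of_nonneg_left B3 (Real.exp_pos (-δ)).le
      have k2 : Real.exp (-δ) * (Real.exp δ * fnormSq (g*h)) = fnormSq (g*h) := by
        rw [← mul_assoc, mul_comm (Real.exp (-δ)) (Real.exp δ), hLexp, one_mul]
      rw [k2] at k
      nlinarith [mul_le_mul_of_nonneg_right hneg hT0]
    have hT'big : (2/3) * fnormSq g ≤ fnormSq (g*h) - 2 := by nlinarith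
    -- bound on |u - 1|
    have nsq : Complex.normSq (w/w' - 1)
        = (4*(fnormSq h - 2))/((fnormSq g + 2)*(fnormSq (g*h) - 2)) := by
      rw [hu, Complex.normSq_div]
      simp only [Complex.normSq_neg, Complex.normSq_mul, Complex.normSq_I,
        normSq_Nc, normSq_Dc]
      norm_num [Complex.normSq_apply]
    have hh3 : fnormSq h - 2 ≤ 3*δ^2 := by
      have := cosh_le' hδ0.le hδhalf; linarith
    have hdenpos : (0:ℝ) < (fnormSq g + 2)*(fnormSq (g*h) - 2) := by nlinarith
    have hTsqpos : (0:ℝ) < (fnormSq g)^2 := by nlinarith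
    have habs_sq : ‖w/w'-1‖^2 ≤ (5*δ/fnormSq g)^2 := by
      rw [Complex.sq_norm, nsq, div_pow, div_le_div_iff₀ hdenpos hTsqpos]
      have e1 : (2/3)*(fnormSq g*fnormSq g) ≤ (fnormSq g + 2)*(fnormSq (g*h) - 2) := by
        nlinarith
      have e2 : 4*(fnormSq h - 2)*(fnormSq g)^2 ≤ 12*δ^2*(fnormSq g)^2 := by
        nlinarith [hh3, hTsqpos]
      have e3 : 25*δ^2*((2/3)*(fnormSq g*fnormSq g))
          ≤ 25*δ^2*((fnormSq g+2)*(fnormSq (g*h)-2)) :=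
        mul_le_mul_of_nonneg_left e1 (by positivity)
      nlinarith [e2, e3, mul_nonneg (sq_nonneg δ) (sq_nonneg (fnormSq g))]
    have h5nn : (0:ℝ) ≤ 5*δ/fnormSq g := by positivity
    have habs1 : ‖w/w'-1‖ ≤ 5*δ/fnormSq g := by
      nlinarith [norm_nonneg (w/w'-1), habs_sq]
    have hhalf : ‖w/w'-1‖ ≤ 1/2 := by
      have : 5*δ/fnormSq g ≤ 1/2 := by
        rw [div_le_iff₀ (by linarith)]; nlinarith
      linarith
    have harg := arg_le_of_abs_sub_one_le hhalf
    have hu0 : w/w' ≠ 0 := div_ne_zero hw hw'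
    have hang : ((theta g - theta (g*h) : ℝ) : Real.Angle)
        = ((Complex.arg (w/w') : ℝ) : Real.Angle) := by
      rw [theta_eq g, theta_eq (g*h), ← hw_def, ← hw'_def]
      have hmul : (w/w') * w' = w := div_mul_cancel₀ w hw'
      have harg2 := Complex.arg_mul_coe_angle hu0 hw'
      rw [hmul] at harg2
      rw [Real.Angle.coe_sub, harg2]
      abel
    unfold angDist
    rw [hang]
    have hioc := Complex.arg_mem_Ioc (w/w')
    rw [Real.Angle.toReal_coe_eq_self_iff.mpr ⟨hioc.1, hioc.2⟩]
    have hfin : π * ‖w/w'-1‖ ≤ 4 * (5*δ/fnormSq g) :=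
      mul_le_mul Real.pi_le_four habs1 (norm_nonneg _) (by norm_num)
    have hlast : 4 * (5*δ/fnormSq g) ≤ 40*δ/fnormSq g := by
      rw [mul_div_assoc', div_le_div_iff₀ (by linarith) (by linarith)]
      nlinarith
    linarith
end
end
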